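/- Let t > 1. Then EXP-(1,t)-WT holds if and only if lim_{j→∞} (log λ_j⁻¹)/log j = ∞, i.e., for every M > 0 one has λ_j < j^{−M} for all sufficiently large j; no condition on the weights γ_j is needed. -/

import Mathlib

open Filter Real Set Topology
open scoped ENNReal NNReal

noncomputable section

/-- The weighted eigenvalues `λ_{k,j}`: `1` if `j = 1`, and `γ_k · λ_j` if `j ≥ 2`. -/
def lamKJ (γ lam : ℕ → ℝ) (k j : ℕ) : ℝ := if j = 1 then 1 else γ k * lam j

/-- The information complexity `n(ε,d)`: the extended-natural cardinality of the set of
`d`-tuples of positive integers `(n_1,…,n_d)` with `λ_{1,n_1} ⋯ λ_{d,n_d} > ε²`. -/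
def infoN (γ lam : ℕ → ℝ) (ε : ℝ) (d : ℕ) : ℕ∞ :=
  {n : Fin d → ℕ | (∀ i, 1 ≤ n i) ∧ ε ^ 2 < ∏ i, lamKJ γ lam (i.1 + 1) (n i)}.encard

/-- EXP-SPT with a given exponent `p`: there is `C ≥ 0` with
`n(ε,d) ≤ C (1 + log ε⁻¹)^p` for all `d ≥ 1` and `ε ∈ (0,1]`. -/
def ExpSPTwith (γ lam : ℕ → ℝ) (p : ℝ) : Prop :=
  ∃ C : ℝ, 0 ≤ C ∧ ∀ d : ℕ, 1 ≤ d → ∀ ε : ℝ, 0 < ε → ε ≤ 1 →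
    (infoN γ lam ε d : ℝ≥0∞) ≤ ENNReal.ofReal (C * (1 + Real.log ε⁻¹) ^ p)

/-- Exponential strong polynomial tractability. -/
def ExpSPT (γ lam : ℕ → ℝ) : Prop := ∃ p : ℝ, 0 ≤ p ∧ ExpSPTwith γ lam p

/-- Exponential polynomial tractability: there are `C, q, p ≥ 0` with
`n(ε,d) ≤ C d^q (1 + log ε⁻¹)^p` for all `d ≥ 1` and `ε ∈ (0,1]`. -/
def ExpPT (γ lam : ℕ → ℝ) : Prop :=
  ∃ C q p : ℝ, 0 ≤ C ∧ 0 ≤ q ∧ 0 ≤ p ∧ ∀ d : ℕ, 1 ≤ d → ∀ ε : ℝ, 0 < ε → ε ≤ 1 →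
    (infoN γ lam ε d : ℝ≥0∞) ≤ ENNReal.ofReal (C * (d : ℝ) ^ q * (1 + Real.log ε⁻¹) ^ p)

/-- EXP-QPT with a given exponent `t`. -/
def ExpQPTwith (γ lam : ℕ → ℝ) (t : ℝ) : Prop :=
  ∃ C : ℝ, 0 ≤ C ∧ ∀ d : ℕ, 1 ≤ d → ∀ ε : ℝ, 0 < ε → ε ≤ 1 →
    (infoN γ lam ε d : ℝ≥0∞) ≤
      ENNReal.ofReal (C * Real.exp (t * (1 + Real.log d) * (1 + Real.log (1 + Real.log ε⁻¹))))

/-- Exponential quasi-polynomial tractability. -/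
def ExpQPT (γ lam : ℕ → ℝ) : Prop := ∃ t : ℝ, 0 ≤ t ∧ ExpQPTwith γ lam t

/-- Exponential `(s,t)`-weak tractability:
`log max(1, n(ε,d)) / (d^t + (1 + log ε⁻¹)^s) → 0` as `d + ε⁻¹ → ∞`
(in particular `n(ε,d)` is finite for all such `d, ε`). -/
def ExpSTWT (γ lam : ℕ → ℝ) (s t : ℝ) : Prop :=
  ∀ δ : ℝ, 0 < δ → ∃ T : ℝ, ∀ d : ℕ, 1 ≤ d → ∀ ε : ℝ, 0 < ε → ε ≤ 1 →
    T ≤ (d : ℝ) + ε⁻¹ →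
    ∃ N : ℕ, infoN γ lam ε d = (N : ℕ∞) ∧
      Real.log (max 1 (N : ℝ)) / ((d : ℝ) ^ t + (1 + Real.log ε⁻¹) ^ s) < δ

/-- `j(ε) = max { j ≥ 1 : λ_j > ε² }` (a well-defined maximum when `λ_j → 0`). -/
def jEps (lam : ℕ → ℝ) (ε : ℝ) : ℕ := sSup {j : ℕ | 1 ≤ j ∧ ε ^ 2 < lam j}

/-- `d(ε) = max { d ≥ 1 : γ_d > ε² }`, with `d(ε) = 0` if `γ_1 ≤ ε²`
(a well-defined maximum when `γ_d → 0`). -/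
def dEps (γ : ℕ → ℝ) (ε : ℝ) : ℕ := sSup {d : ℕ | 1 ≤ d ∧ ε ^ 2 < γ d}

/-! ### Auxiliary lemmas -/

lemma tsum_pi_prod : ∀ {d : ℕ} (w : Fin d → ℕ → ℝ≥0∞),
    ∑' n : Fin d → ℕ, ∏ i, w i (n i) = ∏ i, ∑' j, w i j := by
  intro d
  induction d with
  | zero =>
    intro w
    have h : ∀ (b : Fin 0 → ℕ), b ≠ default → (fun _ : Fin 0 → ℕ => (1:ℝ≥0∞)) b = 0 :=
      fun b hb => absurd (Subsingleton.elim b default) hb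
    simp [tsum_eq_single (default : Fin 0 → ℕ) h]
  | succ d ih =>
    intro w
    rw [← (Fin.consEquiv (fun _ : Fin (d+1) => ℕ)).tsum_eq]
    have key : ∀ p : ℕ × (Fin d → ℕ),
        (∏ i, w i ((Fin.consEquiv (fun _ : Fin (d+1) => ℕ)) ⟨p.1, p.2⟩ i))
        = w 0 p.1 * ∏ i : Fin d, w i.succ (p.2 i) := by
      intro p
      rw [Fin.prod_univ_succ]
      simp [Fin.consEquiv]
    calc ∑' p : ℕ × (Fin d → ℕ), ∏ i, w i ((Fin.consEquiv (fun _ : Fin (d+1) => ℕ)) p i)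
        = ∑' p : ℕ × (Fin d → ℕ), w 0 p.1 * ∏ i : Fin d, w i.succ (p.2 i) := by
          refine tsum_congr fun p => ?_
          have := key ⟨p.1, p.2⟩
          simpa using this
      _ = ∑' (a : ℕ), ∑' (b : Fin d → ℕ), w 0 a * ∏ i : Fin d, w i.succ (b i) :=
          ENNReal.tsum_prod (f := fun (a : ℕ) (b : Fin d → ℕ) =>
            w 0 a * ∏ i : Fin d, w i.succ (b i))
      _ = (∑' a, w 0 a) * ∑' b : Fin d → ℕ, ∏ i : Fin d, w i.succ (b i) := by
          simp_rw [ENNReal.tsum_mul_left]; rw [ENNReal.tsum_mul_right]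
      _ = ∏ i, ∑' j, w i j := by rw [ih, Fin.prod_univ_succ]

lemma count_le {d : ℕ} (A : Set (Fin d → ℕ)) (f : (Fin d → ℕ) → ℝ≥0∞) (c : ℝ≥0∞)
    (hc : c ≠ 0) (hA : ∀ n ∈ A, c ≤ f n) (hf : ∑' n, f n ≠ ⊤) :
    ∃ N : ℕ, A.encard = (N : ℕ∞) ∧ (N : ℝ≥0∞) * c ≤ ∑' n, f n := by
  have hfin : A.Finite :=
    (ENNReal.finite_const_le_of_tsum_ne_top hf hc).subset (fun n hn => hA n hn)
  refine ⟨hfin.toFinset.card, hfin.encard_eq_coe_toFinset_card, ?_⟩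
  calc (hfin.toFinset.card : ℝ≥0∞) * c = hfin.toFinset.card • c := by rw [nsmul_eq_mul]
    _ ≤ ∑ n ∈ hfin.toFinset, f n :=
        Finset.card_nsmul_le_sum _ _ _ (fun n hn => hA n (hfin.mem_toFinset.1 hn))
    _ ≤ ∑' n, f n := ENNReal.sum_le_tsum _

/-- auxiliary majorant -/
def gfun (j1 j : ℕ) : ℝ := (if j < j1 then (1:ℝ) else 0) + (j:ℝ) ^ (-2 : ℝ)

lemma gfun_nonneg (j1 j : ℕ) : 0 ≤ gfun j1 j := by
  unfold gfun
  have : (0:ℝ) ≤ (j:ℝ) ^ (-2:ℝ) := Real.rpow_nonneg (Nat.cast_nonneg j) _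
  split <;> linarith

lemma gfun_summable (j1 : ℕ) : Summable (gfun j1) := by
  apply Summable.add
  · exact summable_of_ne_finset_zero (s := Finset.range j1)
      (fun j hj => by simp only [Finset.mem_range] at hj; simp [hj])
  · exact Real.summable_nat_rpow.2 (by norm_num)

lemma key_bound (γ lam : ℕ → ℝ)
    (hlam_anti : AntitoneOn lam (Set.Ici 1)) (hlam1 : lam 1 = 1)
    (hlam_nonneg : ∀ j, 1 ≤ j → 0 ≤ lam j)
    (hγ_pos : ∀ j, 1 ≤ j → 0 < γ j) (hγ_le : ∀ j, 1 ≤ j → γ j ≤ 1)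
    (a : ℝ) (ha : 0 < a) (j1 : ℕ) (hj1 : 2 ≤ j1)
    (hdec : ∀ j : ℕ, j1 ≤ j → lam j < (j:ℝ) ^ (-(2/a)))
    (d : ℕ) (ε : ℝ) (hε : 0 < ε) :
    ∃ N : ℕ, infoN γ lam ε d = (N : ℕ∞) ∧
      (N : ℝ) ≤ (1 + ∑' j, gfun j1 j) ^ d * (ε⁻¹) ^ (2*a) := by
  classical
  set R : ℝ := 1 + ∑' j, gfun j1 j with hRdef
  clear_value R
  have hR1 : 1 ≤ R := by
    rw [hRdef]; exact le_add_of_nonneg_right (tsum_nonneg (gfun_nonneg j1))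
  have hlam_le_one : ∀ j, 1 ≤ j → lam j ≤ 1 := fun j hj => by
    have := hlam_anti (Set.mem_Ici.2 le_rfl) (Set.mem_Ici.2 hj) hj
    rwa [hlam1] at this
  have hKJ_nonneg : ∀ k j, 1 ≤ k → 1 ≤ j → 0 ≤ lamKJ γ lam k j := by
    intro k j hk hj
    unfold lamKJ
    split
    · norm_num
    · exact mul_nonneg (hγ_pos k hk).le (hlam_nonneg j hj)
  have hKJ_le_one : ∀ k j, 1 ≤ k → 1 ≤ j → lamKJ γ lam k j ≤ 1 := by
    intro k j hk hj
    unfold lamKJ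
    split
    · norm_num
    · exact mul_le_one₀ (hγ_le k hk) (hlam_nonneg j hj) (hlam_le_one j hj)
  set W : Fin d → ℕ → ℝ≥0∞ := fun i j =>
    if j = 0 then 0 else (ENNReal.ofReal (lamKJ γ lam (i.1+1) j)) ^ a with hW
  have hfac : ∀ i : Fin d, ∑' j, W i j ≤ ENNReal.ofReal R := by
    intro i
    have hterm : ∀ j, W i j ≤ ENNReal.ofReal (gfun j1 j) := by
      intro j
      rcases Nat.eq_zero_or_pos j with rfl | hj
      · simp [hW]
      have hjne : j ≠ 0 := Nat.pos_iff_ne_zero.1 hj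
      simp only [hW, if_neg hjne]
      by_cases hlt : j < j1
      · have h1 : ENNReal.ofReal (lamKJ γ lam (i.1+1) j) ≤ 1 := by
          rw [← ENNReal.ofReal_one]
          exact ENNReal.ofReal_le_ofReal (hKJ_le_one _ _ (Nat.le_add_left 1 i.1) hj)
        refine le_trans (ENNReal.rpow_le_one h1 ha.le) ?_
        rw [← ENNReal.ofReal_one]
        apply ENNReal.ofReal_le_ofReal
        unfold gfun
        have : (0:ℝ) ≤ (j:ℝ) ^ (-2:ℝ) := Real.rpow_nonneg (Nat.cast_nonneg j) _
        rw [if_pos hlt]; linarith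
      · push_neg at hlt
        have hj2 : 2 ≤ j := le_trans hj1 hlt
        have hjne1 : j ≠ 1 := by omega
        have hjpos : (0:ℝ) < (j:ℝ) := by exact_mod_cast hj
        have hKJle : lamKJ γ lam (i.1+1) j ≤ (j:ℝ) ^ (-(2/a)) := by
          have h1 : lamKJ γ lam (i.1+1) j ≤ lam j := by
            unfold lamKJ; rw [if_neg hjne1]
            exact mul_le_of_le_one_left (hlam_nonneg j (by omega))
              (hγ_le _ (Nat.le_add_left 1 i.1))
          exact h1.trans (hdec j hlt).le
        have h2 : ENNReal.ofReal (lamKJ γ lam (i.1+1) j) ^ a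
            ≤ ENNReal.ofReal ((j:ℝ) ^ (-(2/a))) ^ a :=
          ENNReal.rpow_le_rpow (ENNReal.ofReal_le_ofReal hKJle) ha.le
        refine h2.trans ?_
        rw [ENNReal.ofReal_rpow_of_pos (Real.rpow_pos_of_pos hjpos _), ← Real.rpow_mul hjpos.le]
        have hexp : (-(2/a)) * a = -2 := by field_simp
        rw [hexp]
        apply ENNReal.ofReal_le_ofReal
        unfold gfun
        rw [if_neg (by omega : ¬ j < j1), zero_add]
    calc ∑' j, W i j ≤ ∑' j, ENNReal.ofReal (gfun j1 j) := ENNReal.tsum_le_tsum hterm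
      _ = ENNReal.ofReal (∑' j, gfun j1 j) :=
          (ENNReal.ofReal_tsum_of_nonneg (gfun_nonneg j1) (gfun_summable j1)).symm
      _ ≤ ENNReal.ofReal R := ENNReal.ofReal_le_ofReal (by rw [hRdef]; linarith)
  have htot : ∑' n : Fin d → ℕ, ∏ i, W i (n i) ≤ ENNReal.ofReal R ^ d := by
    rw [tsum_pi_prod]
    calc ∏ i, ∑' j, W i j ≤ ∏ _i : Fin d, ENNReal.ofReal R :=
          Finset.prod_le_prod' (fun i _ => hfac i)
      _ = ENNReal.ofReal R ^ d := by rw [Finset.prod_const, Finset.card_univ, Fintype.card_fin]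
  have htop : ∑' n : Fin d → ℕ, ∏ i, W i (n i) ≠ ⊤ :=
    ne_top_of_le_ne_top (ENNReal.pow_ne_top ENNReal.ofReal_ne_top) htot
  set c : ℝ≥0∞ := ENNReal.ofReal (ε^2) ^ a with hcdef
  clear_value c
  have hc0 : c ≠ 0 := by
    rw [hcdef]
    have h0 : 0 < ENNReal.ofReal (ε^2) := ENNReal.ofReal_pos.2 (pow_pos hε 2)
    exact (ENNReal.rpow_pos h0 ENNReal.ofReal_ne_top).ne'
  have hcover : ∀ n ∈ {n : Fin d → ℕ |
      (∀ i, 1 ≤ n i) ∧ ε ^ 2 < ∏ i, lamKJ γ lam (i.1 + 1) (n i)},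
      c ≤ ∏ i, W i (n i) := by
    intro n hn
    obtain ⟨hn1, hn2⟩ := hn
    have heq : ∀ i : Fin d, W i (n i) = ENNReal.ofReal (lamKJ γ lam (i.1+1) (n i)) ^ a := by
      intro i; simp only [hW]; rw [if_neg (by have := hn1 i; omega)]
    calc c = ENNReal.ofReal (ε ^ 2) ^ a := hcdef
      _ ≤ ENNReal.ofReal (∏ i, lamKJ γ lam (i.1+1) (n i)) ^ a :=
          ENNReal.rpow_le_rpow (ENNReal.ofReal_le_ofReal hn2.le) ha.le
      _ = (∏ i, ENNReal.ofReal (lamKJ γ lam (i.1+1) (n i))) ^ a := by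
          rw [ENNReal.ofReal_prod_of_nonneg
            (fun i _ => hKJ_nonneg _ _ (Nat.le_add_left 1 i.1) (hn1 i))]
      _ = ∏ i, ENNReal.ofReal (lamKJ γ lam (i.1+1) (n i)) ^ a :=
          (ENNReal.prod_rpow_of_nonneg ha.le).symm
      _ = ∏ i, W i (n i) := Finset.prod_congr rfl (fun i _ => (heq i).symm)
  obtain ⟨N, hNcard, hNle⟩ := count_le _ _ c hc0 hcover htop
  refine ⟨N, hNcard, ?_⟩
  have hNle' : (N : ℝ≥0∞) * c ≤ ENNReal.ofReal (R ^ d) := by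
    rw [ENNReal.ofReal_pow (by linarith : (0:ℝ) ≤ R)]
    exact hNle.trans htot
  have hcreal : c = ENNReal.ofReal ((ε^2) ^ a) := by
    rw [hcdef, ENNReal.ofReal_rpow_of_pos (pow_pos hε 2)]
  rw [hcreal, ← ENNReal.ofReal_natCast N, ← ENNReal.ofReal_mul (Nat.cast_nonneg N)] at hNle'
  have hreal : (N:ℝ) * (ε^2) ^ a ≤ R ^ d :=
    (ENNReal.ofReal_le_ofReal_iff (pow_nonneg (by linarith) d)).1 hNle'
  have h1 : ((ε:ℝ)^2) ^ a = ε ^ (2*a) := by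
    rw [← Real.rpow_natCast ε 2, ← Real.rpow_mul hε.le]
    norm_num
  have h2 : (ε⁻¹) ^ (2*a) = (ε ^ (2*a))⁻¹ := Real.inv_rpow hε.le _
  have hεpow : 0 < ε ^ (2*a) := Real.rpow_pos_of_pos hε _
  rw [h2, ← div_eq_mul_inv, le_div_iff₀ hεpow]
  rw [h1] at hreal
  exact hreal

set_option maxHeartbeats 1000000 in
lemma stmt5_mp (γ lam : ℕ → ℝ)
    (hlam_anti : AntitoneOn lam (Set.Ici 1)) (hlam1 : lam 1 = 1)
    (hγ_pos : ∀ j, 1 ≤ j → 0 < γ j) (hγ_le : ∀ j, 1 ≤ j → γ j ≤ 1)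
    (t : ℝ) (hwt : ExpSTWT γ lam 1 t) :
    ∀ M : ℝ, 0 < M → ∀ᶠ j : ℕ in atTop, lam j < (j : ℝ) ^ (-M) := by
    intro M hM
    by_contra hcon
    have hfreq : ∃ᶠ j : ℕ in atTop, (j:ℝ) ^ (-M) ≤ lam j := by
      simpa only [not_lt] using (Filter.not_eventually.1 hcon)
    obtain ⟨T, hT⟩ := hwt (1/M) (by positivity)
    have hγ1 : 0 < γ 1 := hγ_pos 1 le_rfl
    set c0 : ℝ := 2 + Real.log 2 - (1/2) * Real.log (γ 1) with hc0def
    clear_value c0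
    have hlogγ : Real.log (γ 1) ≤ 0 := Real.log_nonpos hγ1.le (hγ_le 1 le_rfl)
    have hc0pos : 0 < c0 := by
      have h2 : (0:ℝ) ≤ Real.log 2 := Real.log_nonneg one_le_two
      rw [hc0def]; linarith
    -- ε as a function of j
    set E : ℕ → ℝ := fun j => Real.sqrt (γ 1 * (j:ℝ) ^ (-M)) / 2 with hEdef
    clear_value E
    have hEpos : ∀ j : ℕ, 1 ≤ j → 0 < E j := by
      intro j hj
      have h1 : (0:ℝ) < (j:ℝ) ^ (-M) :=
        Real.rpow_pos_of_pos (by exact_mod_cast Nat.lt_of_lt_of_le Nat.zero_lt_one hj) _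
      have h2 := Real.sqrt_pos.2 (mul_pos hγ1 h1)
      simp only [hEdef]; linarith
    have hEle : ∀ j : ℕ, 1 ≤ j → E j ≤ 1 := by
      intro j hj
      have hjpos : (0:ℝ) < (j:ℝ) := by exact_mod_cast Nat.lt_of_lt_of_le Nat.zero_lt_one hj
      have h1 : (j:ℝ) ^ (-M) ≤ 1 :=
        Real.rpow_le_one_of_one_le_of_nonpos (by exact_mod_cast hj) (by linarith)
      have h2 : γ 1 * (j:ℝ) ^ (-M) ≤ 1 :=
        mul_le_one₀ (hγ_le 1 le_rfl) (Real.rpow_pos_of_pos hjpos _).le h1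
      have h3 : Real.sqrt (γ 1 * (j:ℝ) ^ (-M)) ≤ 1 := by
        rw [show (1:ℝ) = Real.sqrt 1 by rw [Real.sqrt_one]]
        exact Real.sqrt_le_sqrt h2
      simp only [hEdef]; linarith
    -- eventual bounds
    have htendE : Tendsto (fun j : ℕ => (E j)⁻¹) atTop atTop := by
      apply Filter.Tendsto.inv_tendsto_nhdsGT_zero
      rw [tendsto_nhdsWithin_iff]
      constructor
      · have h1 : Tendsto (fun j : ℕ => (j:ℝ) ^ (-M)) atTop (nhds 0) :=
          (tendsto_rpow_neg_atTop hM).comp tendsto_natCast_atTop_atTop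
        have h2 : Tendsto (fun j : ℕ => γ 1 * (j:ℝ) ^ (-M)) atTop (nhds 0) := by
          simpa using h1.const_mul (γ 1)
        have h3 : Tendsto (fun j : ℕ => Real.sqrt (γ 1 * (j:ℝ) ^ (-M))) atTop (nhds 0) := by
          have := (Real.continuous_sqrt.tendsto 0).comp h2
          simpa [Function.comp_def] using this
        simpa [hEdef] using h3.div_const 2
      · filter_upwards [eventually_ge_atTop 1] with j hj
        exact Set.mem_Ioi.2 (hEpos j hj)
    have e1 : ∀ᶠ j : ℕ in atTop, T ≤ 1 + (E j)⁻¹ := by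
      have := htendE.eventually_ge_atTop T
      filter_upwards [this] with j hj
      linarith
    have e2 : ∀ᶠ j : ℕ in atTop, 2 * c0 / M ≤ Real.log j :=
      (Real.tendsto_log_atTop.comp tendsto_natCast_atTop_atTop).eventually_ge_atTop _
    have e3 : ∀ᶠ j : ℕ in atTop, 2 ≤ j := eventually_ge_atTop 2
    obtain ⟨j, hlamj, hTj, hlogj, hj2⟩ := (hfreq.and_eventually (e1.and (e2.and e3))).exists
    have hj1 : 1 ≤ j := by omega
    have hjpos : (0:ℝ) < (j:ℝ) := by exact_mod_cast Nat.lt_of_lt_of_le Nat.zero_lt_one hj1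
    have hεpos := hEpos j hj1
    have hεle := hEle j hj1
    have hrMpos : (0:ℝ) < (j:ℝ) ^ (-M) := Real.rpow_pos_of_pos hjpos _
    have hargpos : (0:ℝ) < γ 1 * (j:ℝ) ^ (-M) := mul_pos hγ1 hrMpos
    have hsqrtpos : 0 < Real.sqrt (γ 1 * (j:ℝ) ^ (-M)) := Real.sqrt_pos.2 hargpos
    have hε2 : (E j)^2 = γ 1 * (j:ℝ) ^ (-M) / 4 := by
      simp only [hEdef]
      rw [div_pow, Real.sq_sqrt hargpos.le]
      norm_num
    obtain ⟨N, hNeq, hNlt⟩ := hT 1 le_rfl (E j) hεpos hεle (by simpa using hTj)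
    -- j ≤ N
    have hjleN : (j : ℕ∞) ≤ (N : ℕ∞) := by
      rw [← hNeq]
      unfold infoN
      set A : Set (Fin 1 → ℕ) := {n : Fin 1 → ℕ |
        (∀ i, 1 ≤ n i) ∧ (E j) ^ 2 < ∏ i, lamKJ γ lam (i.1 + 1) (n i)} with hA
      have hrange : Set.range (fun v : Fin j => (fun _ : Fin 1 => v.1 + 1)) ⊆ A := by
        rintro n ⟨v, rfl⟩
        constructor
        · intro i; show 1 ≤ v.1 + 1; omega
        · show (E j) ^ 2 < ∏ i : Fin 1, lamKJ γ lam (i.1 + 1) (v.1 + 1)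
          rw [Fin.prod_univ_one]
          have hi0 : ((0 : Fin 1).1 + 1) = 1 := rfl
          rw [hi0]
          by_cases hv : v.1 + 1 = 1
          · unfold lamKJ
            rw [if_pos hv, hε2]
            have h1 : (j:ℝ) ^ (-M) ≤ 1 :=
              Real.rpow_le_one_of_one_le_of_nonpos (by exact_mod_cast hj1) (by linarith)
            nlinarith [hγ_le 1 le_rfl, hγ1]
          · unfold lamKJ
            rw [if_neg hv, hε2]
            have hv2 : 2 ≤ v.1 + 1 := by omega
            have hvj : v.1 + 1 ≤ j := by omega
            have hmono : lam j ≤ lam (v.1 + 1) :=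
              hlam_anti (Set.mem_Ici.2 (by omega)) (Set.mem_Ici.2 hj1) (by exact_mod_cast hvj)
            have hlamjlb : (j:ℝ) ^ (-M) ≤ lam (v.1+1) := le_trans hlamj hmono
            have hrpos : (0:ℝ) < (j:ℝ) ^ (-M) := Real.rpow_pos_of_pos hjpos _
            nlinarith [hγ1]
      have hinj : Function.Injective (fun v : Fin j => (fun _ : Fin 1 => v.1 + 1)) := by
        intro v w h
        have := congrFun h 0
        simp only [] at this
        exact Fin.ext (by omega)
      calc (j : ℕ∞) = (Set.univ : Set (Fin j)).encard := by simp [Set.encard_univ]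
        _ ≤ A.encard := Set.encard_le_encard_of_injOn
            (fun v _ => hrange ⟨v, rfl⟩) hinj.injOn
    have hjN : (j : ℝ) ≤ (N : ℝ) := by exact_mod_cast (by exact_mod_cast hjleN : j ≤ N)
    -- compute the log of ε⁻¹
    have hLeq : Real.log (E j)⁻¹ = Real.log 2 - (1/2) * Real.log (γ 1) + (M/2) * Real.log j := by
      rw [Real.log_inv]
      simp only [hEdef]
      rw [Real.log_div hsqrtpos.ne' two_ne_zero, Real.log_sqrt hargpos.le,
        Real.log_mul hγ1.ne' (Real.rpow_pos_of_pos hjpos _).ne', Real.log_rpow hjpos]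
      ring
    -- the denominator
    have hlogjpos : 0 < Real.log j := Real.log_pos (by exact_mod_cast hj2)
    have hD : ((1:ℕ):ℝ) ^ t + (1 + Real.log (E j)⁻¹) ^ (1:ℝ) = c0 + (M/2) * Real.log j := by
      rw [Nat.cast_one, Real.one_rpow, Real.rpow_one, hLeq, hc0def]; ring
    have hDpos : (0:ℝ) < c0 + (M/2) * Real.log j := by
      have := mul_pos (half_pos hM) hlogjpos; linarith
    rw [hD] at hNlt
    have hnum : Real.log j ≤ Real.log (max 1 (N:ℝ)) := by
      apply Real.log_le_log hjpos
      exact le_trans hjN (le_max_right _ _)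
    have hMc0 : c0 ≤ (M/2) * Real.log j := by
      rw [div_le_iff₀ hM] at hlogj
      nlinarith
    have hge : 1/M ≤ Real.log (max 1 (N:ℝ)) / (c0 + (M/2) * Real.log j) := by
      rw [div_le_div_iff₀ hM hDpos]
      calc 1 * (c0 + (M/2) * Real.log j) ≤ M * Real.log j := by nlinarith
        _ ≤ Real.log (max 1 (N:ℝ)) * M := by nlinarith
    linarith

set_option maxHeartbeats 1000000 in
lemma stmt5_mpr (γ lam : ℕ → ℝ)
    (hlam_anti : AntitoneOn lam (Set.Ici 1)) (hlam1 : lam 1 = 1)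
    (hlam_nonneg : ∀ j, 1 ≤ j → 0 ≤ lam j)
    (hγ_pos : ∀ j, 1 ≤ j → 0 < γ j) (hγ_le : ∀ j, 1 ≤ j → γ j ≤ 1)
    (t : ℝ) (ht : 1 < t)
    (hdecay : ∀ M : ℝ, 0 < M → ∀ᶠ j : ℕ in atTop, lam j < (j : ℝ) ^ (-M)) :
    ExpSTWT γ lam 1 t := by
    intro δ hδ
    set a : ℝ := δ / 8 with hadef
    clear_value a
    have ha : 0 < a := by rw [hadef]; linarith
    obtain ⟨j0, hj0⟩ := eventually_atTop.1 (hdecay (2/a) (div_pos two_pos ha))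
    set j1 : ℕ := max j0 2 with hj1def
    have hj1_2 : 2 ≤ j1 := le_max_right _ _
    have hdec : ∀ j : ℕ, j1 ≤ j → lam j < (j:ℝ) ^ (-(2/a)) :=
      fun j hj => hj0 j (le_trans (le_max_left _ _) hj)
    set R : ℝ := 1 + ∑' j, gfun j1 j with hRdef
    clear_value R
    have hR1 : 1 ≤ R := by
      rw [hRdef]; exact le_add_of_nonneg_right (tsum_nonneg (gfun_nonneg j1))
    have hRpos : 0 < R := by linarith
    have hlogR : 0 ≤ Real.log R := Real.log_nonneg hR1
    -- choose D0
    have htend : Tendsto (fun d : ℕ => (δ/4) * (d:ℝ) ^ (t-1)) atTop atTop := by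
      apply Tendsto.const_mul_atTop (by linarith : (0:ℝ) < δ/4)
      exact (tendsto_rpow_atTop (by linarith)).comp tendsto_natCast_atTop_atTop
    obtain ⟨D0, hD0⟩ := eventually_atTop.1 (htend.eventually_ge_atTop (Real.log R))
    set Ebig : ℝ := Real.exp (4 * (D0:ℝ) * Real.log R / δ) with hEbigdef
    clear_value Ebig
    refine ⟨(D0:ℝ) + Ebig, ?_⟩
    intro d hd ε hε hε1 hT
    obtain ⟨N, hNeq, hNle⟩ := key_bound γ lam hlam_anti hlam1 hlam_nonneg hγ_pos hγ_le
      a ha j1 hj1_2 hdec d ε hε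
    rw [← hRdef] at hNle
    refine ⟨N, hNeq, ?_⟩
    have hεinv1 : 1 ≤ ε⁻¹ := (one_le_inv₀ hε).2 hε1
    set L : ℝ := Real.log ε⁻¹ with hLdef
    clear_value L
    have hL0 : 0 ≤ L := by rw [hLdef]; exact Real.log_nonneg hεinv1
    have hdpos : (0:ℝ) < d := by exact_mod_cast Nat.lt_of_lt_of_le Nat.zero_lt_one hd
    have hdt1 : 1 ≤ (d:ℝ) ^ t := Real.one_le_rpow (by exact_mod_cast hd) (by linarith)
    set D : ℝ := (d:ℝ) ^ t + (1 + L) ^ (1:ℝ) with hDdef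
    clear_value D
    have hD1 : D = (d:ℝ) ^ t + (1 + L) := by rw [hDdef, Real.rpow_one]
    have hDpos : 0 < D := by rw [hD1]; nlinarith
    have hDge1 : (d:ℝ) ^ t ≤ D := by rw [hD1]; nlinarith
    have hDge2 : 1 + L ≤ D := by rw [hD1]; nlinarith
    have hB1 : 1 ≤ R ^ d * (ε⁻¹) ^ (2*a) := by
      have h1 : (1:ℝ) ≤ R ^ d := one_le_pow₀ hR1
      have h2 : (1:ℝ) ≤ (ε⁻¹) ^ (2*a) := Real.one_le_rpow hεinv1 (by positivity)
      nlinarith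
    have hnum : Real.log (max 1 (N:ℝ)) ≤ (d:ℝ) * Real.log R + (2*a) * L := by
      have hmax : max 1 (N:ℝ) ≤ R ^ d * (ε⁻¹) ^ (2*a) := max_le hB1 hNle
      have h3 : Real.log (max 1 (N:ℝ)) ≤ Real.log (R ^ d * (ε⁻¹) ^ (2*a)) :=
        Real.log_le_log (lt_of_lt_of_le one_pos (le_max_left _ _)) hmax
      rw [Real.log_mul (pow_pos hRpos d).ne' (Real.rpow_pos_of_pos (inv_pos.2 hε) _).ne',
        Real.log_pow, Real.log_rpow (inv_pos.2 hε)] at h3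
      rw [hLdef]
      exact h3
    have key1 : (d:ℝ) * Real.log R ≤ (δ/4) * D := by
      by_cases hdD : D0 ≤ d
      · have h4 := hD0 d hdD
        have h5 : (d:ℝ) * Real.log R ≤ (d:ℝ) * ((δ/4) * (d:ℝ) ^ (t-1)) :=
          mul_le_mul_of_nonneg_left h4 (by positivity)
        have h6 : (d:ℝ) * ((δ/4) * (d:ℝ) ^ (t-1)) = (δ/4) * (d:ℝ) ^ t := by
          rw [show (d:ℝ) ^ t = (d:ℝ) ^ (1:ℝ) * (d:ℝ) ^ (t-1) by
            rw [← Real.rpow_add hdpos]; norm_num, Real.rpow_one]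
          ring
        have h7 : (δ/4) * (d:ℝ)^t ≤ (δ/4) * D :=
          mul_le_mul_of_nonneg_left hDge1 (by linarith)
        linarith
      · push_neg at hdD
        have hdle : (d:ℝ) ≤ (D0:ℝ) := by exact_mod_cast hdD.le
        have hEε : Ebig ≤ ε⁻¹ := by linarith
        have hlogE : 4 * (D0:ℝ) * Real.log R / δ ≤ L := by
          rw [hLdef]
          calc 4 * (D0:ℝ) * Real.log R / δ = Real.log Ebig := by rw [hEbigdef, Real.log_exp]
            _ ≤ Real.log ε⁻¹ := Real.log_le_log (by rw [hEbigdef]; exact Real.exp_pos _) hEε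
        have h9 : (d:ℝ) * Real.log R ≤ (D0:ℝ) * Real.log R :=
          mul_le_mul_of_nonneg_right hdle hlogR
        have h7 : (D0:ℝ) * Real.log R ≤ (δ/4) * L := by
          have h10 := mul_le_mul_of_nonneg_left hlogE
            (by linarith : (0:ℝ) ≤ δ/4)
          calc (D0:ℝ) * Real.log R = (δ/4) * (4 * (D0:ℝ) * Real.log R / δ) := by
                field_simp
            _ ≤ (δ/4) * L := h10
        have hLD : L ≤ D := (le_add_of_nonneg_left zero_le_one).trans hDge2
        have h8 : (δ/4) * L ≤ (δ/4) * D :=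
          mul_le_mul_of_nonneg_left hLD (le_of_lt (div_pos hδ four_pos))
        linarith
    have key2 : (2*a) * L ≤ (δ/4) * D := by
      have h2a : (2*a) = δ/4 := by rw [hadef]; ring
      rw [h2a]
      have hLD : L ≤ D := (le_add_of_nonneg_left zero_le_one).trans hDge2
      exact mul_le_mul_of_nonneg_left hLD (le_of_lt (div_pos hδ four_pos))
    rw [div_lt_iff₀ hDpos]
    calc Real.log (max 1 (N:ℝ)) ≤ (δ/4)*D + (δ/4)*D := by linarith
      _ = (δ/2) * D := by ring
      _ < δ * D := by
          have := mul_pos (half_pos hδ) hDpos; nlinarith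


/-- for t > 1, EXP-(1,t)-WT holds iff for every M > 0 one eventually has
λ_j < j^(-M); no condition on the weights γ_j is needed. -/
theorem stmt5 (γ lam : ℕ → ℝ)
    (hlam_anti : AntitoneOn lam (Set.Ici 1)) (hlam1 : lam 1 = 1) (hlam2 : 0 < lam 2)
    (hlam_nonneg : ∀ j, 1 ≤ j → 0 ≤ lam j)
    (hγ_anti : AntitoneOn γ (Set.Ici 1))
    (hγ_pos : ∀ j, 1 ≤ j → 0 < γ j) (hγ_le : ∀ j, 1 ≤ j → γ j ≤ 1)
    (t : ℝ) (ht : 1 < t) :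
    ExpSTWT γ lam 1 t ↔
      (∀ M : ℝ, 0 < M → ∀ᶠ j : ℕ in atTop, lam j < (j : ℝ) ^ (-M)) :=
  ⟨stmt5_mp γ lam hlam_anti hlam1 hγ_pos hγ_le t,
   stmt5_mpr γ lam hlam_anti hlam1 hlam_nonneg hγ_pos hγ_le t ht⟩
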